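/- For any Hermitian matrix Λ, non-negative measure Φ_w on T, and θ ∈ T, the convolution identity (1/2π)(Γ*(Λ) * Φ̌_w)(θ) = Γ*(Λ ⊙ conj(Γ(Φ_w)))(θ) holds, where Φ̌_w(ϕ) = Φ_w(−ϕ). -/
import Mathlib


open MeasureTheory Matrix
open scoped ENNReal ComplexOrder

/-- The circle `T = (-π, π]`, modeled as `ℝ / 2πℤ`. -/
abbrev Tcircle := AddCircle (2 * Real.pi)

/-- The optimal mass transport cost `S(Φ₀, Φ₁)` with cost function `c`: the infimum of
`∫∫ c dM` over all transport plans `M` (non-negative measures on `T × T`) whose marginals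
are `Φ₀` and `Φ₁`.  (It equals `∞` when no transport plan exists, e.g. when the total
masses differ.) -/
noncomputable def otCost (c : Tcircle → Tcircle → ℝ) (Φ₀ Φ₁ : Measure Tcircle) : ℝ≥0∞ :=
  sInf { x | ∃ M : Measure (Tcircle × Tcircle),
      M.map Prod.fst = Φ₀ ∧ M.map Prod.snd = Φ₁ ∧
      x = ∫⁻ p, ENNReal.ofReal (c p.1 p.2) ∂M }

/-- The Fourier vector `a(θ) = (1, e^{iθ}, ..., e^{i(n-1)θ})` on the circle. -/
noncomputable def aVecC (n : ℕ) (θ : Tcircle) : Fin n → ℂ :=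
  fun k => fourier (k : ℤ) θ

/-- `Γ(Φ) = (1/2π) ∫ a(θ) a(θ)ᴴ dΦ(θ)`, entrywise `Γ(Φ)_{jk} = (1/2π) ∫ e^{i(j-k)θ} dΦ`. -/
noncomputable def GammaC (n : ℕ) (μ : Measure Tcircle) : Matrix (Fin n) (Fin n) ℂ :=
  Matrix.of fun j k : Fin n =>
    ((1 / (2 * Real.pi) : ℝ) : ℂ) * ∫ θ, fourier ((j : ℤ) - (k : ℤ)) θ ∂μ

/-- A matrix is Toeplitz if its entries depend only on the difference of the indices. -/
def IsToeplitz {n : ℕ} (R : Matrix (Fin n) (Fin n) ℂ) : Prop :=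
  ∀ j k j' k' : Fin n, (j : ℤ) - (k : ℤ) = (j' : ℤ) - (k' : ℤ) → R j k = R j' k'

/-- The adjoint map `Γ*(Λ)(θ) = (1/2π) a(θ)ᴴ Λ a(θ)`. -/
noncomputable def GammaStarC (n : ℕ) (Λ : Matrix (Fin n) (Fin n) ℂ) (θ : Tcircle) : ℂ :=
  ((1 / (2 * Real.pi) : ℝ) : ℂ) * (star (aVecC n θ) ⬝ᵥ (Λ *ᵥ aVecC n θ))

/-- the convolution identity
`(1/2π)(Γ*(Λ) * Φ̌_w)(θ) = Γ*(Λ ⊙ conj(Γ(Φ_w)))(θ)`, where `Φ̌_w(ϕ) = Φ_w(−ϕ)` and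
`(f * μ)(θ) = ∫ f(θ − ϕ) dμ(ϕ)`. -/
lemma fourier_argAdd (m : ℤ) (x y : Tcircle) :
    (fourier m (x + y) : ℂ) = fourier m x * fourier m y := by
  simp_rw [fourier_apply, smul_add, AddCircle.toCircle_add, Circle.coe_mul]

lemma integrable_fourier (m : ℤ) (μ : Measure Tcircle) [IsFiniteMeasure μ] :
    Integrable (fun x : Tcircle => (fourier m x : ℂ)) μ := by
  haveI : Fact (0 < 2 * Real.pi) := ⟨Real.two_pi_pos⟩
  haveI : CompactSpace Tcircle := AddCircle.compactSpace _
  exact (map_continuous (fourier m)).integrable_of_hasCompactSupport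
    (HasCompactSupport.of_compactSpace _)

lemma key_pointwise (j k : ℤ) (z : ℂ) (θ x : Tcircle) :
    (starRingEnd ℂ) (fourier j (θ + x) : ℂ) * (z * fourier k (θ + x)) =
      ((starRingEnd ℂ) (fourier j θ : ℂ) * z * fourier k θ) * fourier (k - j) x := by
  rw [fourier_argAdd, fourier_argAdd, _root_.map_mul]
  have h : (fourier (k - j) x : ℂ) = (starRingEnd ℂ) (fourier j x : ℂ) * fourier k x := by
    rw [← neg_add_eq_sub, fourier_add, fourier_neg]
  rw [h]; ring

lemma contGS (n : ℕ) (Λ : Matrix (Fin n) (Fin n) ℂ) : Continuous (GammaStarC n Λ) := by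
  unfold GammaStarC aVecC dotProduct mulVec
  refine continuous_const.mul (continuous_finset_sum _ fun j _ => Continuous.mul ?_ ?_)
  · exact (map_continuous (fourier (j : ℤ))).star
  · exact continuous_finset_sum _ fun k _ =>
      continuous_const.mul (map_continuous (fourier (k : ℤ)))

theorem gammaStar_convolution_identity (n : ℕ) (Λ : Matrix (Fin n) (Fin n) ℂ)
    (hΛ : Λ.IsHermitian) (Φw : Measure Tcircle) [IsFiniteMeasure Φw] (θ : Tcircle) :
    ((1 / (2 * Real.pi) : ℝ) : ℂ) *
        (∫ ϕ, GammaStarC n Λ (θ - ϕ) ∂(Φw.map (fun x : Tcircle => -x))) =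
      GammaStarC n (Λ.hadamard ((GammaC n Φw).map star)) θ := by
  have hcont : Continuous fun ϕ : Tcircle => GammaStarC n Λ (θ - ϕ) :=
    (contGS n Λ).comp (continuous_const.sub continuous_id)
  rw [MeasureTheory.integral_map measurable_neg.aemeasurable hcont.aestronglyMeasurable]
  simp only [sub_neg_eq_add]
  unfold GammaStarC aVecC GammaC
  simp only [dotProduct, mulVec, hadamard_apply, Matrix.map_apply, Matrix.of_apply,
    Pi.star_apply, Complex.star_def, Finset.mul_sum, key_pointwise, _root_.map_mul,
    Complex.conj_ofReal]
  rw [integral_finset_sum _ (fun j _ => integrable_finset_sum _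
    (fun k _ => ((integrable_fourier _ _).const_mul _).const_mul _))]
  simp only [integral_finset_sum _ (fun k (_ : k ∈ Finset.univ) =>
    ((integrable_fourier _ Φw).const_mul _).const_mul _)]
  simp only [integral_const_mul, _root_.map_mul, Complex.conj_ofReal, ← integral_conj,
    ← fourier_neg, neg_sub, neg_add_eq_sub, Finset.mul_sum]
  refine Finset.sum_congr rfl fun j _ => Finset.sum_congr rfl fun k _ => ?_
  ring
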